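/- Let S : ℝ → ℝ be Lebesgue measurable, subadditive, and satisfy S(qx) = q·S(x) for all x ∈ ℝ and all rationals q ≥ 0. Then there exist constants c⁺, c⁻ ∈ ℝ such that S(x) = c⁺x for x ≥ 0 and S(x) = c⁻x for x ≤ 0. -/

import Mathlib

open MeasureTheory Set Pointwise

theorem stmt_6 (S : ℝ → ℝ) (hmeas : Measurable S)
    (hsub : ∀ u v : ℝ, S (u + v) ≤ S u + S v)
    (hhom : ∀ x : ℝ, ∀ q : ℚ, 0 ≤ q → S ((q : ℝ) * x) = (q : ℝ) * S x) :
    ∃ cp cm : ℝ, (∀ x : ℝ, 0 ≤ x → S x = cp * x) ∧ (∀ x : ℝ, x ≤ 0 → S x = cm * x) := by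
  have hS0 : S 0 = 0 := by
    have := hhom 0 0 le_rfl
    simpa using this
  -- a set of positive measure where S and S ∘ neg are bounded
  have key : ∃ n : ℕ, 0 < volume {x : ℝ | S x ≤ n ∧ S (-x) ≤ n} := by
    by_contra h
    push_neg at h
    have hU : (⋃ n : ℕ, {x : ℝ | S x ≤ n ∧ S (-x) ≤ n}) = Set.univ := by
      ext x
      simp only [Set.mem_iUnion, Set.mem_univ, iff_true, Set.mem_setOf_eq]
      obtain ⟨n, hn⟩ := exists_nat_ge (max (S x) (S (-x)))
      exact ⟨n, (le_max_left _ _).trans hn, (le_max_right _ _).trans hn⟩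
    have : volume (⋃ n : ℕ, {x : ℝ | S x ≤ n ∧ S (-x) ≤ n}) = 0 :=
      measure_iUnion_null fun n => le_antisymm (h n) zero_le
    rw [hU] at this
    simp [Real.volume_univ] at this
  obtain ⟨n, hn⟩ := key
  set E : Set ℝ := {x : ℝ | S x ≤ n ∧ S (-x) ≤ n} with hE
  have hEmeas : MeasurableSet E :=
    (measurableSet_le hmeas measurable_const).inter
      (measurableSet_le (hmeas.comp measurable_neg) measurable_const)
  have hst : E - E ∈ nhds (0 : ℝ) :=
    MeasureTheory.Measure.sub_mem_nhds_zero_of_addHaar_pos volume E hEmeas hn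
  -- S bounded by 2n on a ball around 0
  obtain ⟨δ, hδ, hball⟩ := Metric.mem_nhds_iff.1 hst
  have hbdd : ∀ x : ℝ, |x| < δ → |S x| ≤ 2 * n := by
    have hb : ∀ x : ℝ, |x| < δ → S x ≤ 2 * n := by
      intro x hx
      have : x ∈ E - E := hball (by simpa [Metric.mem_ball, Real.dist_eq] using hx)
      obtain ⟨u, hu, v, hv, huv⟩ := this
      have : S x ≤ S u + S (-v) := by
        have := hsub u (-v)
        rw [← huv]
        simpa [sub_eq_add_neg] using this
      calc S x ≤ S u + S (-v) := this
        _ ≤ n + n := add_le_add hu.1 hv.2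
        _ = 2 * n := by ring
    intro x hx
    refine abs_le.2 ⟨?_, hb x hx⟩
    have h1 : (0:ℝ) ≤ S x + S (-x) := by
      have := hsub x (-x)
      simpa [hS0] using this
    have h2 : S (-x) ≤ 2 * n := hb (-x) (by simpa using hx)
    linarith
  -- continuity at 0
  have hcont0 : ∀ ε : ℝ, 0 < ε → ∃ δ' > 0, ∀ x : ℝ, |x| < δ' → |S x| < ε := by
    intro ε hε
    obtain ⟨q, hq0, hq⟩ := exists_rat_btwn (show (0:ℝ) < ε / (2 * n + 1) by positivity)
    have hq0' : (0:ℝ) < q := hq0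
    refine ⟨q * δ, by positivity, fun x hx => ?_⟩
    have hy : |x / q| < δ := by
      rw [abs_div, div_lt_iff₀ (by positivity)]
      calc |x| < q * δ := hx
        _ = δ * |(q:ℝ)| := by rw [abs_of_pos hq0']; ring
    have hxq : S x = q * S (x / q) := by
      have := hhom (x / q) q (by exact_mod_cast hq0'.le)
      rwa [mul_div_cancel₀ _ (ne_of_gt hq0')] at this
    rw [hxq, abs_mul, abs_of_pos hq0']
    calc (q:ℝ) * |S (x / q)| ≤ q * (2 * n) := by
          exact mul_le_mul_of_nonneg_left (hbdd _ hy) hq0'.le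
      _ < (ε / (2 * n + 1)) * (2 * n + 1) := by
          apply mul_lt_mul' hq.le _ (by positivity) (by positivity)
          nlinarith [hbdd 0 (by simpa using hδ)]
      _ = ε := by field_simp
  -- global continuity
  have hcont : Continuous S := by
    rw [Metric.continuous_iff]
    intro a ε hε
    obtain ⟨δ', hδ', h'⟩ := hcont0 ε hε
    refine ⟨δ', hδ', fun x hx => ?_⟩
    rw [Real.dist_eq] at hx ⊢
    have h1 : S x - S a ≤ S (x - a) := by
      have := hsub a (x - a); linarith [this, (by ring_nf : a + (x - a) = x) ▸ this]
    have h2 : S a - S x ≤ S (a - x) := by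
      have := hsub x (a - x)
      have e : x + (a - x) = a := by ring
      rw [e] at this; linarith
    have b1 : |S (x - a)| < ε := h' _ hx
    have b2 : |S (a - x)| < ε := h' _ (by rwa [abs_sub_comm])
    rw [abs_lt] at b1 b2 ⊢
    constructor <;> linarith
  -- conclude by density
  refine ⟨S 1, -S (-1), ?_, ?_⟩
  · intro x hx
    have hdense : x ∈ closure (((↑) : ℚ → ℝ) '' {q : ℚ | 0 ≤ q}) := by
      rw [Metric.mem_closure_iff]
      intro ε hε
      obtain ⟨q, hq1, hq2⟩ := exists_rat_btwn (show x < x + ε by linarith)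
      refine ⟨q, ⟨q, ?_, rfl⟩, ?_⟩
      · exact_mod_cast (hx.trans hq1.le : (0:ℝ) ≤ q)
      · rw [Real.dist_eq, abs_of_nonpos (by linarith)]
        linarith
    have heq : Set.EqOn S (fun y => S 1 * y) (((↑) : ℚ → ℝ) '' {q : ℚ | 0 ≤ q}) := by
      rintro _ ⟨q, hq, rfl⟩
      have := hhom 1 q hq
      simpa [mul_comm] using this
    have := heq.closure hcont (by continuity)
    exact this hdense
  · intro x hx
    have hdense : -x ∈ closure (((↑) : ℚ → ℝ) '' {q : ℚ | 0 ≤ q}) := by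
      rw [Metric.mem_closure_iff]
      intro ε hε
      obtain ⟨q, hq1, hq2⟩ := exists_rat_btwn (show -x < -x + ε by linarith)
      refine ⟨q, ⟨q, ?_, rfl⟩, ?_⟩
      · exact_mod_cast ((by linarith : (0:ℝ) ≤ -x).trans hq1.le : (0:ℝ) ≤ q)
      · rw [Real.dist_eq, abs_of_nonpos (by linarith)]
        linarith
    have heq : Set.EqOn (fun y => S (-y)) (fun y => S (-1) * y)
        (((↑) : ℚ → ℝ) '' {q : ℚ | 0 ≤ q}) := by
      rintro _ ⟨q, hq, rfl⟩
      have := hhom (-1) q hq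
      simpa [mul_comm] using this
    have := heq.closure (hcont.comp continuous_neg) (by continuity)
    have h2 := this hdense
    simp only at h2
    rw [neg_neg] at h2
    rw [h2]; ring
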